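/- Let n = 2m and let C ⊆ {0,1}^{n−1} be closed under cyclic shifts. For every c ∈ B(C), one has Γ_C(c) = {0} ∪ {i ∈ {1,…,m−1} : CR(c)_j ≠ 0 for all 1 ≤ j ≤ i}, where CR(c) is the cyclic running sum of c. -/

import Mathlib

/-- The Hamming weight of a binary word `x ∈ {0,1}^N`: the number of ones. -/
def wt {N : ℕ} (x : Fin N → Bool) : ℕ :=
  (Finset.univ.filter (fun i => x i = true)).card

/-- `Flip x j` complements the first `j` bits of `x`. -/
def Flip {N : ℕ} (x : Fin N → Bool) (j : ℕ) : Fin N → Bool :=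
  fun i => if (i : ℕ) < j then !(x i) else x i

/-- `cyc x i` is the cyclic right shift of `x` by `i` positions. -/
def cyc {N : ℕ} (x : Fin N → Bool) (i : ℕ) : Fin N → Bool :=
  fun j => x ⟨((j : ℕ) + (N - i % N)) % N, Nat.mod_lt _ j.pos⟩

/-- `j ∈ T_C(x)`: `j ∈ {0,…,n−2}` and `wt(Flip_c(σ(x,j))) ∈ {m−1, m}`,
where `Flip_c` complements the first `m` bits. -/
def TCmem (m : ℕ) (x : Fin (2*m-1) → Bool) (j : ℕ) : Prop :=
  j ≤ 2*m - 2 ∧ (wt (Flip (cyc x j) m) = m - 1 ∨ wt (Flip (cyc x j) m) = m)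

/-- `Γ_C(c)`: the set of shift indices `j ∈ {0,…,2m−2}` such that some `x ∈ C`
has `Flip_c(σ(x,j)) = c` and `min T_C(x) = j`. -/
def GammaC (m : ℕ) (C : Set (Fin (2*m-1) → Bool)) (c : Fin (2*m-1) → Bool) : Set ℕ :=
  {j | j ≤ 2*m - 2 ∧ ∃ x ∈ C, Flip (cyc x j) m = c ∧
    {j' | TCmem m x j'}.Nonempty ∧ sInf {j' | TCmem m x j'} = j}

/-- The cyclic running sum `CR(c)` of `c = c₁…c_{2m−1}`:
`CR(c)₀ = 0` and `CR(c)ᵢ = CR(c)_{i−1} + (−1)^{cᵢ+1} + (−1)^{c_{i+m}+1}`. -/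
def CR (m : ℕ) (c : Fin (2*m-1) → Bool) : ℕ → ℤ
  | 0 => 0
  | i + 1 => CR m c i
      + (if h : i < 2*m - 1 then (if c ⟨i, h⟩ then 1 else -1) else 0)
      + (if h : i + m < 2*m - 1 then (if c ⟨i + m, h⟩ then 1 else -1) else 0)

/- ======== auxiliary development ======== -/

def rot {N : ℕ} (x : Fin N → Bool) (s : ℕ) : Fin N → Bool :=
  fun i => x ⟨((i : ℕ) + s) % N, Nat.mod_lt _ i.pos⟩

lemma cyc_eq_rot {N : ℕ} (x : Fin N → Bool) (e : ℕ) : cyc x e = rot x (N - e % N) := rfl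

lemma rot_congr {N : ℕ} (x : Fin N → Bool) {s s' : ℕ} (h : s % N = s' % N) :
    rot x s = rot x s' := by
  funext i
  simp only [rot]
  congr 1
  exact Fin.ext (Nat.ModEq.add_left _ h)

lemma rot_zero {N : ℕ} (x : Fin N → Bool) : rot x 0 = x := by
  funext i
  simp only [rot]
  congr 1
  exact Fin.ext (by simp [Nat.mod_eq_of_lt i.isLt])

lemma rot_rot {N : ℕ} (x : Fin N → Bool) (s s' : ℕ) :
    rot (rot x s) s' = rot x (s' + s) := by
  funext i
  simp only [rot]
  congr 1
  exact Fin.ext (by simp only [Nat.mod_add_mod, add_assoc])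

lemma cyc_rot_lt {N : ℕ} (x : Fin N → Bool) (e : ℕ) (he : e < N) :
    cyc x e = rot x (N - e) := by
  rw [cyc_eq_rot, Nat.mod_eq_of_lt he]

lemma cyc_zero {N : ℕ} (x : Fin N → Bool) : cyc x 0 = x := by
  rcases Nat.eq_zero_or_pos N with h | h
  · funext i; exact absurd i.isLt (by omega)
  · rw [cyc_eq_rot, Nat.zero_mod, Nat.sub_zero,
      rot_congr x (show N % N = 0 % N by simp [Nat.mod_self]), rot_zero]

lemma sum_shift {N : ℕ} [NeZero N] (f : Fin N → ℤ) (δ : Fin N) :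
    ∑ i : Fin N, f (i + δ) = ∑ i : Fin N, f i :=
  Fintype.sum_equiv (Equiv.addRight δ) _ _ fun _ => rfl

lemma sum_pair_support {N : ℕ} (f : Fin N → ℤ) (a b : Fin N) (hab : a ≠ b)
    (h : ∀ i, i ≠ a → i ≠ b → f i = 0) : ∑ i : Fin N, f i = f a + f b := by
  rw [← Finset.sum_pair hab]
  refine (Finset.sum_subset (Finset.subset_univ _) ?_).symm
  intro x _ hx
  simp only [Finset.mem_insert, Finset.mem_singleton] at hx
  push_neg at hx
  exact h x hx.1 hx.2

def swt (m : ℕ) (x : Fin (2*m-1) → Bool) (e : ℕ) : ℤ :=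
  ∑ i : Fin (2*m-1),
    if xor (x ⟨((i : ℕ) + e) % (2*m-1), Nat.mod_lt _ i.pos⟩) (decide ((i : ℕ) < m)) then 1 else 0

lemma wt_flip_rot (m : ℕ) (x : Fin (2*m-1) → Bool) (e : ℕ) :
    (wt (Flip (rot x e) m) : ℤ) = swt m x e := by
  rw [wt, Finset.card_filter, swt]
  push_cast
  apply Finset.sum_congr rfl
  intro i _
  have : Flip (rot x e) m i
      = xor (x ⟨((i : ℕ) + e) % (2*m-1), Nat.mod_lt _ i.pos⟩) (decide ((i : ℕ) < m)) := by
    by_cases h : (i : ℕ) < m <;> simp [Flip, rot, h]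
  rw [this]

lemma sum_rot {N : ℕ} (hN2 : 2 ≤ N) (f : ℕ → ℤ) :
    ∑ i : Fin N, f (((i : ℕ) + 1) % N) = ∑ i : Fin N, f (i : ℕ) := by
  haveI : NeZero N := ⟨by omega⟩
  have h1 : (1 : ℕ) < N := by omega
  calc ∑ i : Fin N, f (((i : ℕ) + 1) % N)
      = ∑ i : Fin N, f ((i + (⟨1, h1⟩ : Fin N) : Fin N) : ℕ) := by
        apply Finset.sum_congr rfl; intro i _; simp [Fin.add_def]
    _ = ∑ i : Fin N, f (i : ℕ) := sum_shift (fun i => f (i : ℕ)) ⟨1, h1⟩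

lemma key_step (m : ℕ) (hm : 2 ≤ m) (x₀ : Fin (2*m-1) → Bool) (d : ℕ) (hd : d + 1 ≤ m - 1)
    (h1 : d < 2*m-1) (h2 : d + m < 2*m-1) :
    swt m x₀ (d+1) =
      swt m x₀ d + (if x₀ ⟨d, h1⟩ then 1 else -1) - (if x₀ ⟨d + m, h2⟩ then 1 else -1) := by
  have hN : 0 < 2*m-1 := by omega
  set F : ℕ → ℤ := fun v =>
    if xor (x₀ ⟨(v + d) % (2*m-1), Nat.mod_lt _ hN⟩) (decide (v < m)) then 1 else 0 with hF
  set G : ℕ → ℤ := fun v =>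
    if xor (x₀ ⟨(v + (d+1)) % (2*m-1), Nat.mod_lt _ hN⟩) (decide (v < m)) then 1 else 0 with hG
  have hswt0 : swt m x₀ d = ∑ i : Fin (2*m-1), F (i : ℕ) := rfl
  have hswt1 : swt m x₀ (d+1) = ∑ i : Fin (2*m-1), G (i : ℕ) := rfl
  have hrot : ∑ i : Fin (2*m-1), F (((i : ℕ) + 1) % (2*m-1)) = ∑ i : Fin (2*m-1), F (i : ℕ) :=
    sum_rot (by omega) F
  have pA : m - 1 < 2*m-1 := by omega
  have pB : 2*m-2 < 2*m-1 := by omega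
  have hsum : ∑ i : Fin (2*m-1), (G (i : ℕ) - F (((i : ℕ) + 1) % (2*m-1))) =
      -(if x₀ ⟨d + m, h2⟩ then 1 else -1) + (if x₀ ⟨d, h1⟩ then 1 else -1) := by
    rw [sum_pair_support (fun i : Fin (2*m-1) => G (i : ℕ) - F (((i : ℕ) + 1) % (2*m-1)))
      ⟨m-1, pA⟩ ⟨2*m-2, pB⟩ (by intro h; rw [Fin.mk.injEq] at h; omega) ?side]
    case side =>
      intro i hia hib
      have hiv1 : (i : ℕ) ≠ m - 1 := fun h => hia (Fin.ext h)
      have hiv2 : (i : ℕ) ≠ 2*m-2 := fun h => hib (Fin.ext h)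
      have hilt : (i : ℕ) < 2*m-1 := i.isLt
      simp only [sub_eq_zero]
      have hv1 : ((i : ℕ) + 1) % (2*m-1) = (i : ℕ) + 1 := Nat.mod_eq_of_lt (by omega)
      rw [hv1]
      simp only [hG, hF]
      have hidx : (⟨((i : ℕ) + (d+1)) % (2*m-1), Nat.mod_lt _ hN⟩ : Fin (2*m-1))
          = ⟨((i : ℕ) + 1 + d) % (2*m-1), Nat.mod_lt _ hN⟩ := Fin.ext (by
            have h' : (i : ℕ) + (d+1) = (i : ℕ) + 1 + d := by omega
            rw [h'])
      rw [hidx]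
      by_cases hr : (i : ℕ) < m
      · have hr1 : (i : ℕ) + 1 < m := by omega
        simp [hr, hr1]
      · have hr1 : ¬ ((i : ℕ) + 1 < m) := by omega
        simp [hr, hr1]
    · show G (m-1) - F ((m - 1 + 1) % (2*m-1)) + (G (2*m-2) - F ((2*m-2+1) % (2*m-1))) = _
      have e1 : (m - 1 + (d+1)) % (2*m-1) = d + m := by
        rw [Nat.mod_eq_of_lt (by omega)]; omega
      have e2 : (m - 1 + 1) % (2*m-1) = m := by
        rw [Nat.mod_eq_of_lt (by omega)]; omega
      have e3 : (m + d) % (2*m-1) = d + m := by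
        rw [Nat.mod_eq_of_lt (by omega)]; omega
      have e4 : (2*m-2 + (d+1)) % (2*m-1) = d := by
        rw [show 2*m-2 + (d+1) = (2*m-1) + d by omega, Nat.add_mod_left,
          Nat.mod_eq_of_lt (by omega)]
      have e5 : (2*m-2+1) % (2*m-1) = 0 := by
        rw [show 2*m-2+1 = 2*m-1 by omega, Nat.mod_self]
      have e6 : (0 + d) % (2*m-1) = d := by
        rw [Nat.zero_add, Nat.mod_eq_of_lt (by omega)]
      have hGa : G (m-1) = if x₀ ⟨d + m, h2⟩ then 0 else 1 := by
        simp only [hG]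
        have hidx : (⟨(m - 1 + (d+1)) % (2*m-1), Nat.mod_lt _ hN⟩ : Fin (2*m-1))
            = ⟨d + m, h2⟩ := Fin.ext e1
        rw [hidx]
        have : decide (m - 1 < m) = true := decide_eq_true (by omega)
        rw [this]
        cases hx : x₀ ⟨d + m, h2⟩ <;> simp [hx]
      have hFa : F ((m - 1 + 1) % (2*m-1)) = if x₀ ⟨d + m, h2⟩ then 1 else 0 := by
        rw [e2]
        simp only [hF]
        have hidx : (⟨(m + d) % (2*m-1), Nat.mod_lt _ hN⟩ : Fin (2*m-1))
            = ⟨d + m, h2⟩ := Fin.ext e3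
        rw [hidx]
        have : decide (m < m) = false := decide_eq_false (by omega)
        rw [this]
        cases hx : x₀ ⟨d + m, h2⟩ <;> simp [hx]
      have hGb : G (2*m-2) = if x₀ ⟨d, h1⟩ then 1 else 0 := by
        simp only [hG]
        have hidx : (⟨(2*m-2 + (d+1)) % (2*m-1), Nat.mod_lt _ hN⟩ : Fin (2*m-1))
            = ⟨d, h1⟩ := Fin.ext e4
        rw [hidx]
        have : decide (2*m-2 < m) = false := decide_eq_false (by omega)
        rw [this]
        cases hx : x₀ ⟨d, h1⟩ <;> simp [hx]
      have hFb : F ((2*m-2+1) % (2*m-1)) = if x₀ ⟨d, h1⟩ then 0 else 1 := by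
        rw [e5]
        simp only [hF]
        have hidx : (⟨(0 + d) % (2*m-1), Nat.mod_lt _ hN⟩ : Fin (2*m-1))
            = ⟨d, h1⟩ := Fin.ext e6
        rw [hidx]
        have : decide ((0:ℕ) < m) = true := decide_eq_true (by omega)
        rw [this]
        cases hx : x₀ ⟨d, h1⟩ <;> simp [hx]
      rw [hGa, hFa, hGb, hFb]
      cases hx : x₀ ⟨d, h1⟩ <;> cases hy : x₀ ⟨d + m, h2⟩ <;> simp [hx, hy] <;> ring
  rw [Finset.sum_sub_distrib] at hsum
  rw [hswt0, hswt1]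
  rw [hrot] at hsum
  linarith [hsum]

lemma CR_succ (m : ℕ) (c : Fin (2*m-1) → Bool) (d : ℕ) (h1 : d < 2*m-1) (h2 : d + m < 2*m-1) :
    CR m c (d+1) = CR m c d + (if c ⟨d, h1⟩ then 1 else -1) + (if c ⟨d+m, h2⟩ then 1 else -1) := by
  simp only [CR]
  rw [dif_pos h1, dif_pos h2]

lemma key1 (m : ℕ) (hm : 2 ≤ m) (x₀ : Fin (2*m-1) → Bool) :
    ∀ d, d ≤ m - 1 → (wt (Flip (rot x₀ d) m) : ℤ) = (wt (Flip x₀ m) : ℤ) - CR m (Flip x₀ m) d := by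
  intro d
  induction d with
  | zero => intro _; rw [rot_zero]; simp [CR]
  | succ d ih =>
    intro hd
    have h1 : d < 2*m-1 := by omega
    have h2 : d + m < 2*m-1 := by omega
    rw [wt_flip_rot, key_step m hm x₀ d hd h1 h2, ← wt_flip_rot, ih (by omega),
      CR_succ m (Flip x₀ m) d h1 h2]
    have hc1 : Flip x₀ m ⟨d, h1⟩ = !(x₀ ⟨d, h1⟩) := by
      simp [Flip, show d < m by omega]
    have hc2 : Flip x₀ m ⟨d+m, h2⟩ = x₀ ⟨d+m, h2⟩ := by
      simp [Flip, show ¬ (d+m < m) by omega]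
    rw [hc1, hc2]
    cases x₀ ⟨d, h1⟩ <;> cases x₀ ⟨d+m, h2⟩ <;> simp <;> ring

lemma CR_even (m : ℕ) (c : Fin (2*m-1) → Bool) :
    ∀ d, d ≤ m - 1 → 2 ∣ CR m c d := by
  intro d
  induction d with
  | zero => intro _; simp [CR]
  | succ d ih =>
    intro hd
    have h1 : d < 2*m-1 := by omega
    have h2 : d + m < 2*m-1 := by omega
    rw [CR_succ m c d h1 h2]
    have := ih (by omega)
    cases c ⟨d, h1⟩ <;> cases c ⟨d+m, h2⟩ <;> simp <;> omega

lemma chain_pos (m : ℕ) (hm : 2 ≤ m) (c : Fin (2*m-1) → Bool)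
    (hne : ∀ d, 1 ≤ d → d ≤ m-1 → CR m c d ≠ 0) (h0 : 0 ≤ CR m c 1) :
    2 ≤ CR m c (m-1) := by
  suffices H : ∀ d, 1 ≤ d → d ≤ m-1 → 2 ≤ CR m c d by exact H (m-1) (by omega) le_rfl
  intro d
  induction d with
  | zero => intro h _; omega
  | succ d ih =>
    intro _ hd
    rcases Nat.eq_zero_or_pos d with rfl | hdpos
    · show 2 ≤ CR m c 1
      have he := CR_even m c 1 (by omega)
      have := hne 1 (by omega) (by omega)
      omega
    · have h1 : d < 2*m-1 := by omega
      have h2 : d + m < 2*m-1 := by omega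
      have hstep : -2 ≤ CR m c (d+1) - CR m c d ∧ CR m c (d+1) - CR m c d ≤ 2 := by
        rw [CR_succ m c d h1 h2]
        cases c ⟨d, h1⟩ <;> cases c ⟨d+m, h2⟩ <;> simp <;> omega
      have hge := ih (by omega) (by omega)
      have hee := CR_even m c (d+1) (by omega)
      have hnn := hne (d+1) (by omega) (by omega)
      omega

lemma chain_neg (m : ℕ) (hm : 2 ≤ m) (c : Fin (2*m-1) → Bool)
    (hne : ∀ d, 1 ≤ d → d ≤ m-1 → CR m c d ≠ 0) (h0 : CR m c 1 ≤ 0) :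
    CR m c (m-1) ≤ -2 := by
  suffices H : ∀ d, 1 ≤ d → d ≤ m-1 → CR m c d ≤ -2 by exact H (m-1) (by omega) le_rfl
  intro d
  induction d with
  | zero => intro h _; omega
  | succ d ih =>
    intro _ hd
    rcases Nat.eq_zero_or_pos d with rfl | hdpos
    · show CR m c 1 ≤ -2
      have he := CR_even m c 1 (by omega)
      have := hne 1 (by omega) (by omega)
      omega
    · have h1 : d < 2*m-1 := by omega
      have h2 : d + m < 2*m-1 := by omega
      have hstep : -2 ≤ CR m c (d+1) - CR m c d ∧ CR m c (d+1) - CR m c d ≤ 2 := by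
        rw [CR_succ m c d h1 h2]
        cases c ⟨d, h1⟩ <;> cases c ⟨d+m, h2⟩ <;> simp <;> omega
      have hge := ih (by omega) (by omega)
      have hee := CR_even m c (d+1) (by omega)
      have hnn := hne (d+1) (by omega) (by omega)
      omega

lemma CR_sum (m : ℕ) (c : Fin (2*m-1) → Bool) (d : ℕ) :
    CR m c d = ∑ i ∈ Finset.range d,
      ((if h : i < 2*m-1 then (if c ⟨i,h⟩ then (1:ℤ) else -1) else 0) +
       (if h : i + m < 2*m-1 then (if c ⟨i+m,h⟩ then (1:ℤ) else -1) else 0)) := by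
  induction d with
  | zero => simp [CR]
  | succ d ih =>
    rw [Finset.sum_range_succ, ← ih]
    simp only [CR]
    ring

lemma wt_int {N : ℕ} (c : Fin N → Bool) :
    (wt c : ℤ) = ∑ i : Fin N, (if c i then (1:ℤ) else 0) := by
  rw [wt, Finset.card_filter]
  push_cast
  rfl

lemma sum_eps {N : ℕ} (c : Fin N → Bool) :
    ∑ i : Fin N, (if c i then (1:ℤ) else -1) = 2*(wt c : ℤ) - N := by
  have h : ∀ i : Fin N, (if c i then (1:ℤ) else -1) = 2*(if c i then (1:ℤ) else 0) - 1 := by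
    intro i; cases c i <;> norm_num
  rw [Finset.sum_congr rfl (fun i _ => h i), Finset.sum_sub_distrib, ← Finset.mul_sum, ← wt_int]
  simp [Finset.card_univ, mul_comm]

lemma CRend (m : ℕ) (hm : 2 ≤ m) (c : Fin (2*m-1) → Bool) (hm1 : m - 1 < 2*m-1) :
    CR m c (m-1) = 2*(wt c : ℤ) - (2*m-1) - (if c ⟨m-1, hm1⟩ then 1 else -1) := by
  rw [CR_sum, Finset.sum_add_distrib]
  set f : ℕ → ℤ := fun i => if h : i < 2*m-1 then (if c ⟨i,h⟩ then (1:ℤ) else -1) else 0 with hf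
  have hshift : (∑ i ∈ Finset.range (m-1),
      (if h : i + m < 2*m-1 then (if c ⟨i+m,h⟩ then (1:ℤ) else -1) else 0))
      = ∑ i ∈ Finset.Ico m (2*m-1), f i := by
    rw [Finset.sum_Ico_eq_sum_range]
    have hr : 2*m-1 - m = m-1 := by omega
    rw [hr]
    apply Finset.sum_congr rfl
    intro i _
    rw [hf]
    rw [Nat.add_comm m i]
  rw [hshift]
  have hA : ∑ i ∈ Finset.range m, f i = ∑ i ∈ Finset.range (m-1), f i + f (m-1) := by
    conv_lhs => rw [show m = (m-1) + 1 by omega]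
    rw [Finset.sum_range_succ]
  have hB : ∑ i ∈ Finset.range m, f i + ∑ i ∈ Finset.Ico m (2*m-1), f i
      = ∑ i ∈ Finset.range (2*m-1), f i := by
    rw [Finset.range_eq_Ico, Finset.range_eq_Ico]
    exact Finset.sum_Ico_consecutive f (m := 0) (n := m) (k := 2*m-1) (by omega) (by omega)
  have htot : ∑ i ∈ Finset.range (2*m-1), f i = 2*(wt c : ℤ) - (2*m-1) := by
    rw [← Fin.sum_univ_eq_sum_range f (2*m-1)]
    have hfi : ∀ i : Fin (2*m-1), f (i : ℕ) = (if c i then (1:ℤ) else -1) := by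
      intro i
      simp only [hf, dif_pos i.isLt, Fin.eta]
    rw [Finset.sum_congr rfl (fun i _ => hfi i), sum_eps]
    omega
  have hfm : f (m-1) = if c ⟨m-1, hm1⟩ then (1:ℤ) else -1 := by
    simp only [hf]
    rw [dif_pos hm1]
  linarith [hA, hB, htot, hfm]

lemma key3 (m : ℕ) (hm : 2 ≤ m) (y : Fin (2*m-1) → Bool) (h0 : 0 < 2*m-1) :
    (wt (Flip (rot y m) m) : ℤ) + (wt (Flip y m) : ℤ)
      = 2*m - 2*(if y ⟨0, h0⟩ then 1 else 0) := by
  haveI : NeZero (2*m-1) := ⟨by omega⟩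
  have hNm : m < 2*m-1 := by omega
  rw [show (Flip y m) = Flip (rot y 0) m by rw [rot_zero], wt_flip_rot, wt_flip_rot]
  set K : Fin (2*m-1) → ℤ := fun k =>
    if xor (y k) (decide (((k:ℕ) + (2*m-1 - m)) % (2*m-1) < m)) then 1 else 0 with hK
  have hsw : ∀ i : Fin (2*m-1), K (i + (⟨m, hNm⟩ : Fin (2*m-1))) =
      (if xor (y ⟨((i:ℕ) + m) % (2*m-1), Nat.mod_lt _ i.pos⟩) (decide ((i:ℕ) < m))
        then (1:ℤ) else 0) := by
    intro i
    have hEq : (i + (⟨m, hNm⟩ : Fin (2*m-1)))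
        = (⟨((i:ℕ) + m) % (2*m-1), Nat.mod_lt _ h0⟩ : Fin (2*m-1)) := by
      rw [Fin.add_def]
    rw [hK, hEq]
    have hreg : ((((i:ℕ) + m) % (2*m-1)) + (2*m-1 - m)) % (2*m-1) = (i:ℕ) := by
      rw [Nat.mod_add_mod, show (i:ℕ) + m + (2*m-1 - m) = (i:ℕ) + (2*m-1) by omega,
        Nat.add_mod_right, Nat.mod_eq_of_lt i.isLt]
    simp only [hreg]
  have h1 : swt m y m = ∑ k : Fin (2*m-1), K k := by
    have hr : swt m y m = ∑ i : Fin (2*m-1),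
        (if xor (y ⟨((i:ℕ) + m) % (2*m-1), Nat.mod_lt _ i.pos⟩) (decide ((i:ℕ) < m))
          then (1:ℤ) else 0) := rfl
    rw [hr, ← sum_shift K ⟨m, hNm⟩]
    exact Finset.sum_congr rfl (fun i _ => (hsw i).symm)
  have h2 : swt m y 0 = ∑ k : Fin (2*m-1),
      (if xor (y k) (decide ((k:ℕ) < m)) then (1:ℤ) else 0) := by
    have hr : swt m y 0 = ∑ i : Fin (2*m-1),
        (if xor (y ⟨((i:ℕ) + 0) % (2*m-1), Nat.mod_lt _ i.pos⟩) (decide ((i:ℕ) < m))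
          then (1:ℤ) else 0) := rfl
    rw [hr]
    apply Finset.sum_congr rfl
    intro i _
    have hi : (⟨((i:ℕ) + 0) % (2*m-1), Nat.mod_lt _ i.pos⟩ : Fin (2*m-1)) = i :=
      Fin.ext (by simp [Nat.mod_eq_of_lt i.isLt])
    rw [hi]
  rw [h1, h2, ← Finset.sum_add_distrib]
  have hpt : ∀ k : Fin (2*m-1),
      (K k + (if xor (y k) (decide ((k:ℕ) < m)) then (1:ℤ) else 0))
      = 1 + (if k = (⟨0, h0⟩ : Fin (2*m-1)) then (1 - 2*(if y ⟨0, h0⟩ then (1:ℤ) else 0)) else 0) := by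
    intro k
    have hks : (k:ℕ) < 2*m-1 := k.isLt
    rw [hK]
    by_cases hk0 : k = (⟨0, h0⟩ : Fin (2*m-1))
    · have hkv : (k:ℕ) = 0 := by rw [hk0]
      have hreg : (((k:ℕ) + (2*m-1 - m)) % (2*m-1)) = m - 1 := by
        rw [hkv, Nat.zero_add, Nat.mod_eq_of_lt (by omega)]
        omega
      simp only [hreg]
      have hd1 : decide (m - 1 < m) = true := decide_eq_true (by omega)
      have hd2 : decide ((k:ℕ) < m) = true := decide_eq_true (by omega)
      rw [hd1, hd2, if_pos hk0, ← hk0]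
      cases y k <;> simp <;> ring
    · have hkv : (k:ℕ) ≠ 0 := fun h => hk0 (Fin.ext h)
      rw [if_neg hk0]
      by_cases hkm : (k:ℕ) < m
      · have hreg : (((k:ℕ) + (2*m-1 - m)) % (2*m-1)) = (k:ℕ) + m - 1 := by
          rw [Nat.mod_eq_of_lt (by omega)]; omega
        simp only [hreg]
        have hd1 : decide ((k:ℕ) + m - 1 < m) = false := decide_eq_false (by omega)
        have hd2 : decide ((k:ℕ) < m) = true := decide_eq_true hkm
        rw [hd1, hd2]
        cases y k <;> simp
      · have hreg : (((k:ℕ) + (2*m-1 - m)) % (2*m-1)) = (k:ℕ) - m := by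
          rw [Nat.mod_eq_sub_mod (by omega), Nat.mod_eq_of_lt (by omega)]
          omega
        simp only [hreg]
        have hd1 : decide ((k:ℕ) - m < m) = true := decide_eq_true (by omega)
        have hd2 : decide ((k:ℕ) < m) = false := decide_eq_false hkm
        rw [hd1, hd2]
        cases y k <;> simp
  rw [Finset.sum_congr rfl (fun k _ => hpt k), Finset.sum_add_distrib, Finset.sum_const,
    Finset.sum_ite_eq' Finset.univ (⟨0, h0⟩ : Fin (2*m-1))
      (fun _ => (1 - 2*(if y ⟨0, h0⟩ then (1:ℤ) else 0)))]
  simp only [Finset.card_univ, Fintype.card_fin, Finset.mem_univ, if_true, nsmul_eq_mul, mul_one]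
  cases y ⟨0, h0⟩ <;> simp <;> omega

/-- for `C` closed under cyclic shifts and `c ∈ B(C)`,
`Γ_C(c) = {0} ∪ {i ∈ {1,…,m−1} : CR(c)_j ≠ 0 for all 1 ≤ j ≤ i}`. -/
theorem stmt17 (m : ℕ) (C : Set (Fin (2*m-1) → Bool))
    (hcyc : ∀ x ∈ C, ∀ i, cyc x i ∈ C)
    (c : Fin (2*m-1) → Bool)
    (hc : ∃ x ∈ C, Flip x m = c ∧ (wt c = m - 1 ∨ wt c = m)) :
    GammaC m C c =
      {0} ∪ {i | 1 ≤ i ∧ i ≤ m - 1 ∧ ∀ j, 1 ≤ j → j ≤ i → CR m c j ≠ 0} := by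
  
  obtain ⟨x₀, hx₀C, hx₀flip, ht⟩ := hc
  by_cases hm : 2 ≤ m
  case neg =>
    ext j
    simp only [Set.mem_union, Set.mem_singleton_iff, Set.mem_setOf_eq, GammaC]
    constructor
    · rintro ⟨hj2, -⟩
      left; omega
    · rintro (rfl | ⟨h1, h2, -⟩)
      · exact ⟨by omega, x₀, hx₀C, by rw [cyc_zero]; exact hx₀flip,
          ⟨0, ⟨by omega, by rw [cyc_zero, hx₀flip]; exact ht⟩⟩,
          Nat.sInf_eq_zero.mpr (Or.inl ⟨by omega, by rw [cyc_zero, hx₀flip]; exact ht⟩)⟩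
      · omega
  case pos =>
    have hN0 : 0 < 2*m-1 := by omega
    ext j
    simp only [Set.mem_union, Set.mem_singleton_iff, Set.mem_setOf_eq, GammaC]
    constructor
    · rintro ⟨hj2, x, hxC, hflip, hne, hinf⟩
      by_cases hj0 : j = 0
      · exact Or.inl hj0
      right
      have hj1 : 1 ≤ j := by omega
      set y : Fin (2*m-1) → Bool := cyc x j with hy
      have hyC : y ∈ C := hcyc x hxC j
      have hflipy : Flip y m = c := hflip
      have hyrot : y = rot x (2*m-1 - j) := by rw [hy, cyc_rot_lt x j (by omega)]
      have hrotyd : ∀ d, 1 ≤ d → d ≤ j → cyc x (j - d) = rot y d := by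
        intro d h1 h2
        rw [hyrot, rot_rot, cyc_rot_lt x (j-d) (by omega),
          show 2*m-1 - (j-d) = d + (2*m-1-j) from by omega]
      have hWnot : ∀ d, 1 ≤ d → d ≤ j →
          wt (Flip (rot y d) m) ≠ m - 1 ∧ wt (Flip (rot y d) m) ≠ m := by
        intro d h1 h2
        have hlt : j - d < sInf {j' | TCmem m x j'} := by omega
        have hnotmem := Nat.notMem_of_lt_sInf hlt
        rw [← hrotyd d h1 h2]
        exact ⟨fun h => hnotmem ⟨by omega, Or.inl h⟩, fun h => hnotmem ⟨by omega, Or.inr h⟩⟩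
      have hCRne : ∀ d, 1 ≤ d → d ≤ j → d ≤ m-1 → CR m c d ≠ 0 := by
        intro d h1 h2 h3 h0
        have hk := key1 m hm y d h3
        rw [hflipy, h0] at hk
        obtain ⟨hw1, hw2⟩ := hWnot d h1 h2
        rcases ht with ht | ht <;> omega
      have hjm : j ≤ m - 1 := by
        by_contra hbig
        have hmj : m ≤ j := by omega
        obtain ⟨hWm1, hWm2⟩ := hWnot m (by omega) hmj
        have h3 := key3 m hm y hN0
        rw [hflipy] at h3
        have hm1lt : m - 1 < 2*m-1 := by omega
        have hend := CRend m hm c hm1lt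
        have hc0 : c ⟨0, hN0⟩ = !(y ⟨0, hN0⟩) := by
          rw [← hflipy]; simp [Flip, show (0:ℕ) < m by omega]
        have h0m : 0 + m < 2*m-1 := by omega
        have hcr1 : CR m c 1 = CR m c 0 + (if c ⟨0, hN0⟩ then 1 else -1)
            + (if c ⟨0+m, h0m⟩ then 1 else -1) := CR_succ m c 0 hN0 h0m
        have hcr0 : CR m c 0 = 0 := rfl
        have hneall : ∀ d, 1 ≤ d → d ≤ m-1 → CR m c d ≠ 0 := fun d a b => hCRne d a (by omega) b
        cases hyv : y ⟨0, hN0⟩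
        · -- y0 = false, c0 = true
          have hc0t : c ⟨0, hN0⟩ = true := by rw [hc0, hyv]; rfl
          have hpos : 0 ≤ CR m c 1 := by
            rw [hcr1, hcr0, hc0t]
            cases c ⟨0+m, h0m⟩ <;> simp
          have hchain := chain_pos m hm c hneall hpos
          rcases ht with ht | ht
          · cases hcm1 : c ⟨m-1, hm1lt⟩ <;> rw [hcm1] at hend <;> simp at hend <;> omega
          · rw [hyv] at h3
            simp at h3
            omega
        · -- y0 = true, c0 = false
          have hc0t : c ⟨0, hN0⟩ = false := by rw [hc0, hyv]; rfl
          have hneg : CR m c 1 ≤ 0 := by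
            rw [hcr1, hcr0, hc0t]
            cases c ⟨0+m, h0m⟩ <;> simp
          have hchain := chain_neg m hm c hneall hneg
          rcases ht with ht | ht
          · rw [hyv] at h3
            simp only [if_true] at h3
            omega
          · cases hcm1 : c ⟨m-1, hm1lt⟩ <;> rw [hcm1] at hend <;> simp at hend <;> omega
      exact ⟨hj1, hjm, fun d hd1 hd2 => hCRne d hd1 (by omega) (by omega)⟩
    · rintro (rfl | ⟨hi1, hi2, hCR⟩)
      · exact ⟨by omega, x₀, hx₀C, by rw [cyc_zero]; exact hx₀flip,
          ⟨0, ⟨by omega, by rw [cyc_zero, hx₀flip]; exact ht⟩⟩,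
          Nat.sInf_eq_zero.mpr (Or.inl ⟨by omega, by rw [cyc_zero, hx₀flip]; exact ht⟩)⟩
      · set x : Fin (2*m-1) → Bool := cyc x₀ (2*m-1 - j) with hx
        have hxC : x ∈ C := hcyc x₀ hx₀C _
        have hxrot : x = rot x₀ j := by
          rw [hx, cyc_rot_lt x₀ (2*m-1-j) (by omega),
            show 2*m-1 - (2*m-1-j) = j from by omega]
        have hcycj : cyc x j = x₀ := by
          rw [hxrot, cyc_rot_lt _ j (by omega), rot_rot,
            show (2*m-1-j) + j = 2*m-1 by omega,
            rot_congr x₀ (show (2*m-1) % (2*m-1) = 0 % (2*m-1) by simp [Nat.mod_self]),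
            rot_zero]
        have hTj : TCmem m x j := ⟨by omega, by rw [hcycj, hx₀flip]; exact ht⟩
        have hnot : ∀ i, i < j → ¬ TCmem m x i := by
          intro i hij hT
          obtain ⟨hTb, hTw⟩ := hT
          have hceq : cyc x i = rot x₀ (j - i) := by
            rw [hxrot, cyc_rot_lt _ i (by omega), rot_rot,
              show (2*m-1-i) + j = (2*m-1) + (j - i) by omega]
            exact rot_congr x₀ (Nat.add_mod_left _ _)
          rw [hceq] at hTw
          have hk := key1 m hm x₀ (j - i) (by omega)
          rw [hx₀flip] at hk
          have hcrne := hCR (j-i) (by omega) (by omega)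
          have hev := CR_even m c (j-i) (by omega)
          rcases ht with ht | ht <;> rcases hTw with hw | hw <;> rw [hw] at hk <;> omega
        refine ⟨by omega, x, hxC, by rw [hcycj]; exact hx₀flip, ⟨j, hTj⟩, ?_⟩
        refine le_antisymm (Nat.sInf_le hTj) (le_of_not_gt fun hlt => ?_)
        exact hnot _ hlt (Nat.sInf_mem (s := {j' | TCmem m x j'}) ⟨j, hTj⟩)
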